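/- Let A ∈ ℝ^{m×n}, q < m/2, and let U be the orthogonal projection onto R = ⋂_{T ⊆ [m], |T| = m−2q} rowspan(A_T). Then for every x* ∈ ℝ^n, {x ∈ ℝ^n : Ux = Ux*} = x* + ker(U), and this is the inclusion-wise smallest solution set among all (A,q)-robust functions: for any (A,q)-robust G, {x : Ux = Ux*} ⊆ {x : G(x) = G(x*)}. -/

import Mathlib

open Matrix Finset

noncomputable section

/-- ℓ₀ "norm": the number of nonzero coordinates. -/
def l0 {m : ℕ} (w : Fin m → ℝ) : ℕ := (Finset.univ.filter fun i => w i ≠ 0).card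

/-- The row span of the submatrix `A_T` (rows of `A` indexed by `T`), viewed inside
Euclidean space. -/
def rowspanE {m n : ℕ} (A : Matrix (Fin m) (Fin n) ℝ) (T : Finset (Fin m)) :
    Submodule ℝ (EuclideanSpace ℝ (Fin n)) :=
  Submodule.span ℝ {w : EuclideanSpace ℝ (Fin n) | ∃ i ∈ T, w = A i}

/-- The range (column space) of a square matrix, viewed inside Euclidean space. -/
def rangeE {n : ℕ} (M : Matrix (Fin n) (Fin n) ℝ) : Submodule ℝ (EuclideanSpace ℝ (Fin n)) where
  carrier := {x | ∃ v : EuclideanSpace ℝ (Fin n), M.mulVec v = x}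
  zero_mem' := ⟨0, Matrix.mulVec_zero M⟩
  add_mem' := by
    rintro a b ⟨va, ha⟩ ⟨vb, hb⟩
    exact ⟨va + vb, by simp [Matrix.mulVec_add, ha, hb]⟩
  smul_mem' := by
    rintro c a ⟨v, hv⟩
    exact ⟨c • v, by simp [Matrix.mulVec_smul, hv]⟩

/-- Any vector with at most `2q` nonzero coordinates can be split as a difference of two
vectors each with at most `q` nonzero coordinates. -/
lemma l0_split {m q : ℕ} (w : Fin m → ℝ) (hw : l0 w ≤ 2 * q) :
    ∃ e₁ e₂ : Fin m → ℝ, l0 e₁ ≤ q ∧ l0 e₂ ≤ q ∧ e₁ - e₂ = w := by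
  classical
  set S : Finset (Fin m) := Finset.univ.filter fun i => w i ≠ 0 with hS
  have hScard : S.card = l0 w := rfl
  obtain ⟨S₁, hS₁sub, hS₁card⟩ := Finset.exists_subset_card_eq (min_le_left S.card q)
  refine ⟨fun i => if i ∈ S₁ then w i else 0,
          fun i => if i ∈ S \ S₁ then -(w i) else 0, ?_, ?_, ?_⟩
  · have hsub : (Finset.univ.filter fun i =>
        (fun i => if i ∈ S₁ then w i else 0) i ≠ 0) ⊆ S₁ := by
      intro i hi
      simp only [Finset.mem_filter, Finset.mem_univ, true_and] at hi
      by_contra h; exact hi (if_neg h)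
    refine le_trans (Finset.card_le_card hsub) ?_
    rw [hS₁card]; exact min_le_right _ _
  · have hsub : (Finset.univ.filter fun i =>
        (fun i => if i ∈ S \ S₁ then -(w i) else 0) i ≠ 0) ⊆ S \ S₁ := by
      intro i hi
      simp only [Finset.mem_filter, Finset.mem_univ, true_and] at hi
      by_contra h; exact hi (if_neg h)
    refine le_trans (Finset.card_le_card hsub) ?_
    rw [Finset.card_sdiff_of_subset hS₁sub, hS₁card]
    omega
  · funext i
    by_cases h1 : i ∈ S₁
    · have h1' : i ∉ S \ S₁ := fun h => (Finset.mem_sdiff.mp h).2 h1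
      simp [h1, h1']
    · by_cases h2 : i ∈ S
      · have h2' : i ∈ S \ S₁ := Finset.mem_sdiff.mpr ⟨h2, h1⟩
        show (if i ∈ S₁ then w i else 0) - (if i ∈ S \ S₁ then -(w i) else 0) = w i
        rw [if_neg h1, if_pos h2']; ring
      · have h2' : i ∉ S \ S₁ := fun h => h2 (Finset.mem_sdiff.mp h).1
        have hwi : w i = 0 := by
          by_contra h
          exact h2 (by simp [hS, h])
        simp [h1, h2', hwi]

/-- If `v` is orthogonal to `rowspanE A T`, then `A *ᵥ v` is supported outside `T`. -/
lemma l0_mulVec_le {m n q : ℕ} (A : Matrix (Fin m) (Fin n) ℝ) (T : Finset (Fin m))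
    (hT : T.card = m - 2 * q) (hqm : 2 * q ≤ m) (v : EuclideanSpace ℝ (Fin n))
    (hv : v ∈ (rowspanE A T)ᗮ) : l0 (A.mulVec (v : Fin n → ℝ)) ≤ 2 * q := by
  classical
  have hzero : ∀ i ∈ T, A.mulVec (v : Fin n → ℝ) i = 0 := by
    intro i hi
    have hAi : (WithLp.toLp 2 (A i) : EuclideanSpace ℝ (Fin n)) ∈ rowspanE A T :=
      Submodule.subset_span ⟨i, hi, rfl⟩
    have := (Submodule.mem_orthogonal _ v).mp hv _ hAi
    simpa [PiLp.inner_apply, RCLike.inner_apply, Matrix.mulVec, dotProduct, mul_comm] using this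
  have hsub : (Finset.univ.filter fun i => A.mulVec (v : Fin n → ℝ) i ≠ 0) ⊆ Tᶜ := by
    intro i hi
    simp only [Finset.mem_filter, Finset.mem_univ, true_and] at hi
    rw [Finset.mem_compl]
    intro hiT
    exact hi (hzero i hiT)
  calc l0 (A.mulVec (v : Fin n → ℝ)) ≤ Tᶜ.card := Finset.card_le_card hsub
    _ = m - T.card := by rw [Finset.card_compl, Fintype.card_fin]
    _ = 2 * q := by rw [hT]; omega

theorem stmt9 {m n : ℕ} (A : Matrix (Fin m) (Fin n) ℝ) (q : ℕ) (hq : 2 * q < m)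
    (U : Matrix (Fin n) (Fin n) ℝ) (hUsymm : U.IsSymm) (hUidem : U * U = U)
    (hUrange : rangeE U = ⨅ T ∈ {T : Finset (Fin m) | T.card = m - 2 * q}, rowspanE A T)
    (xs : Fin n → ℝ) :
    ({x : Fin n → ℝ | U.mulVec x = U.mulVec xs} =
        {x : Fin n → ℝ | ∃ v : Fin n → ℝ, U.mulVec v = 0 ∧ x = xs + v}) ∧
      ∀ {Z : Type} (G : (Fin n → ℝ) → Z),
        (∀ (x₁ x₂ : Fin n → ℝ) (e₁ e₂ : Fin m → ℝ), l0 e₁ ≤ q → l0 e₂ ≤ q →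
          A.mulVec x₁ + e₁ = A.mulVec x₂ + e₂ → G x₁ = G x₂) →
        {x : Fin n → ℝ | U.mulVec x = U.mulVec xs} ⊆ {x : Fin n → ℝ | G x = G xs} := by
  classical
  constructor
  · ext x
    simp only [Set.mem_setOf_eq]
    constructor
    · intro h
      exact ⟨x - xs, by rw [Matrix.mulVec_sub, h, sub_self], by abel⟩
    · rintro ⟨v, hv0, rfl⟩
      rw [Matrix.mulVec_add, hv0, add_zero]
  · intro Z G hG x hx
    simp only [Set.mem_setOf_eq] at hx ⊢
    set v : EuclideanSpace ℝ (Fin n) := WithLp.toLp 2 (x - xs) with hvdef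
    have hUv : U.mulVec (v : Fin n → ℝ) = 0 := by
      show U.mulVec (x - xs) = 0
      rw [Matrix.mulVec_sub, hx, sub_self]
    -- v is orthogonal to the range of U
    have hvorth : v ∈ (rangeE U)ᗮ := by
      rw [Submodule.mem_orthogonal]
      rintro u ⟨w, hw⟩
      have key : dotProduct (U.mulVec w) (v : Fin n → ℝ) = 0 := by
        rw [dotProduct_comm, Matrix.dotProduct_mulVec, ← Matrix.mulVec_transpose,
          hUsymm.eq, hUv, zero_dotProduct]
      rw [hw] at key
      simpa [PiLp.inner_apply, RCLike.inner_apply, dotProduct, mul_comm] using key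
    -- rewrite as a sup of orthogonal complements
    set s : Set (Finset (Fin m)) := {T : Finset (Fin m) | T.card = m - 2 * q} with hsdef
    have hinf : rangeE U = ⨅ T : s, rowspanE A (T : Finset (Fin m)) := by
      rw [hUrange]; exact iInf_subtype'
    have hsup : (rangeE U)ᗮ = ⨆ T : s, (rowspanE A (T : Finset (Fin m)))ᗮ := by
      have h1 : (⨅ T : s, (rowspanE A (T : Finset (Fin m)))ᗮᗮ) =
          (⨆ T : s, (rowspanE A (T : Finset (Fin m)))ᗮ)ᗮ :=
        Submodule.iInf_orthogonal _
      simp only [Submodule.orthogonal_orthogonal] at h1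
      rw [hinf, h1, Submodule.orthogonal_orthogonal]
    rw [hsup] at hvorth
    -- induction over the sup
    have key : ∀ y : Fin n → ℝ, G (fun j => y j + v j) = G y := by
      refine Submodule.iSup_induction (motive := fun w : EuclideanSpace ℝ (Fin n) =>
        ∀ y : Fin n → ℝ, G (fun j => y j + w j) = G y) _ hvorth ?_ ?_ ?_
      · rintro ⟨T, hT⟩ w hw y
        have hwle : l0 (A.mulVec (w : Fin n → ℝ)) ≤ 2 * q :=
          l0_mulVec_le A T hT hq.le w hw
        obtain ⟨e₁, e₂, he₁, he₂, hee⟩ := l0_split _ hwle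
        refine (hG y (fun j => y j + w j) e₁ e₂ he₁ he₂ ?_).symm
        have hAx : A.mulVec (fun j => y j + w j) =
            A.mulVec y + A.mulVec (w : Fin n → ℝ) := by
          funext i
          simp [Matrix.mulVec, dotProduct, mul_add, Finset.sum_add_distrib]
        rw [hAx, ← hee]
        abel
      · intro y
        have : (fun j => y j + (0 : EuclideanSpace ℝ (Fin n)) j) = y := by
          funext j; show y j + 0 = y j; ring
        rw [this]
      · intro a b ha hb y
        have h1 : (fun j => y j + (a + b) j) =
            (fun j => (fun j' => y j' + a j') j + b j) := by
          funext j; show y j + (a j + b j) = (y j + a j) + b j; ring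
        rw [h1, hb, ha]
    have hx' : x = fun j => xs j + v j := by
      funext j; show x j = xs j + (x j - xs j); ring
    rw [hx']
    exact key xs
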